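/- Let f : ℝⁿ → ℝ be differentiable and L-smooth, let x* be a global minimizer of f with f* = f(x*), and suppose f is α-weakly-quasi-convex with respect to x* with constant α ∈ (0,1]. Define weights ω_0 = 1 and ω_k = 1/2 + √(1/4 + ω_{k−1}²) for k ≥ 1. Let (x_k) be a sequence starting from x_0 such that for each k ≥ 0, x_{k+1} is a global minimizer of f over the affine subspace x_k + span{∇f(x_k), x_k − x_0, Σ_{i=0}^{k} ω_i ∇f(x_i)} (the SESOP iteration). Then for every natural number k ≥ 1, f(x_k) − f* ≤ 2·L·R²/(α²·k²), where R = ‖x_0 − x*‖. -/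

import Mathlib

open scoped RealInnerProductSpace

variable {n : ℕ}

lemma line_hasDerivAt (f : EuclideanSpace ℝ (Fin n) → ℝ) (hdiff : Differentiable ℝ f)
    (c v : EuclideanSpace ℝ (Fin n)) (t : ℝ) :
    HasDerivAt (fun s : ℝ => f (c + s • v)) ⟪gradient f (c + t • v), v⟫ t := by
  have h1 : HasDerivAt (fun s : ℝ => c + s • v) v t := by
    simpa using ((hasDerivAt_id t).smul_const v).const_add c
  have h2 := (hdiff (c + t • v)).hasGradientAt.hasFDerivAt
  have := h2.comp_hasDerivAt t h1
  simpa [InnerProductSpace.toDual_apply_apply, Function.comp_def] using this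

lemma inner_grad_eq_zero_of_min (f : EuclideanSpace ℝ (Fin n) → ℝ) (hdiff : Differentiable ℝ f)
    (p d : EuclideanSpace ℝ (Fin n)) (hmin : ∀ t : ℝ, f p ≤ f (p + t • d)) :
    ⟪gradient f p, d⟫ = 0 := by
  have h := line_hasDerivAt f hdiff p d 0
  rw [show p + (0:ℝ) • d = p by simp] at h
  have hloc : IsLocalMin (fun s : ℝ => f (p + s • d)) 0 :=
    Filter.Eventually.of_forall (fun t => by simpa using hmin t)
  exact hloc.hasDerivAt_eq_zero h

lemma descent_lemma (f : EuclideanSpace ℝ (Fin n) → ℝ) (hdiff : Differentiable ℝ f)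
    (L : ℝ) (hL : 0 < L)
    (hsmooth : ∀ x y : EuclideanSpace ℝ (Fin n),
      ‖gradient f y - gradient f x‖ ≤ L * ‖y - x‖)
    (x v : EuclideanSpace ℝ (Fin n)) :
    f (x + v) ≤ f x + ⟪gradient f x, v⟫ + L / 2 * ‖v‖ ^ 2 := by
  set φ : ℝ → ℝ := fun t => f (x + t • v) - t * ⟪gradient f x, v⟫ - L / 2 * t ^ 2 * ‖v‖ ^ 2 with hφ
  have hder : ∀ t : ℝ, HasDerivAt φ
      (⟪gradient f (x + t • v), v⟫ - ⟪gradient f x, v⟫ - L * t * ‖v‖ ^ 2) t := by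
    intro t
    have h1 := line_hasDerivAt f hdiff x v t
    have h2 : HasDerivAt (fun t : ℝ => t * ⟪gradient f x, v⟫) ⟪gradient f x, v⟫ t := by
      simpa using (hasDerivAt_id t).mul_const _
    have h3 : HasDerivAt (fun t : ℝ => L / 2 * t ^ 2 * ‖v‖ ^ 2) (L * t * ‖v‖ ^ 2) t := by
      have := ((hasDerivAt_pow 2 t).const_mul (L / 2)).mul_const (‖v‖ ^ 2)
      refine this.congr_deriv ?_
      ring
    exact (h1.sub h2).sub h3
  have hmono : AntitoneOn φ (Set.Icc 0 1) := by
    apply antitoneOn_of_deriv_nonpos (convex_Icc 0 1)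
    · exact Continuous.continuousOn (continuous_iff_continuousAt.2 (fun t => (hder t).continuousAt))
    · exact fun t _ => ((hder t).differentiableAt).differentiableWithinAt
    · intro t ht
      rw [interior_Icc] at ht
      rw [(hder t).deriv]
      have hb : ⟪gradient f (x + t • v) - gradient f x, v⟫ ≤ ‖gradient f (x + t • v) - gradient f x‖ * ‖v‖ :=
        real_inner_le_norm _ _
      have hl : ‖gradient f (x + t • v) - gradient f x‖ ≤ L * (t * ‖v‖) := by
        have := hsmooth x (x + t • v)
        simpa [norm_smul, abs_of_pos ht.1] using this
      have hv : (0:ℝ) ≤ ‖v‖ := norm_nonneg _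
      have : ⟪gradient f (x + t • v), v⟫ - ⟪gradient f x, v⟫ ≤ L * t * ‖v‖ ^ 2 := by
        rw [← inner_sub_left]
        calc ⟪gradient f (x + t • v) - gradient f x, v⟫
            ≤ ‖gradient f (x + t • v) - gradient f x‖ * ‖v‖ := hb
          _ ≤ L * (t * ‖v‖) * ‖v‖ := by
              apply mul_le_mul_of_nonneg_right hl hv
          _ = L * t * ‖v‖ ^ 2 := by ring
      linarith
  have h01 := hmono (Set.left_mem_Icc.2 zero_le_one) (Set.right_mem_Icc.2 zero_le_one) zero_le_one
  simp only [hφ] at h01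
  simp only [zero_smul, add_zero, one_smul] at h01
  push_cast at h01
  nlinarith [h01]

set_option maxHeartbeats 1000000 in
theorem sesop_convergence
    (n : ℕ) (f : EuclideanSpace ℝ (Fin n) → ℝ)
    (hdiff : Differentiable ℝ f)
    (L : ℝ) (hL : 0 < L)
    (hsmooth : ∀ x y : EuclideanSpace ℝ (Fin n),
      ‖gradient f y - gradient f x‖ ≤ L * ‖y - x‖)
    (xstar : EuclideanSpace ℝ (Fin n))
    (hmin : ∀ x, f xstar ≤ f x)
    (α : ℝ) (hα : α ∈ Set.Ioc (0 : ℝ) 1)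
    (hwqc : ∀ x, α * (f x - f xstar) ≤ ⟪gradient f x, x - xstar⟫)
    (ω : ℕ → ℝ)
    (hω0 : ω 0 = 1)
    (hωrec : ∀ k : ℕ, ω (k + 1) = 1 / 2 + Real.sqrt (1 / 4 + ω k ^ 2))
    (x : ℕ → EuclideanSpace ℝ (Fin n))
    (hmem : ∀ k : ℕ, ∃ a b c : ℝ,
      x (k + 1) = x k + a • gradient f (x k) + b • (x k - x 0)
        + c • (∑ i ∈ Finset.range (k + 1), ω i • gradient f (x i)))
    (hsubmin : ∀ (k : ℕ) (a b c : ℝ),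
      f (x (k + 1)) ≤ f (x k + a • gradient f (x k) + b • (x k - x 0)
        + c • (∑ i ∈ Finset.range (k + 1), ω i • gradient f (x i))))
    (R : ℝ) (hR : R = ‖x 0 - xstar‖) :
    ∀ k : ℕ, 1 ≤ k → f (x k) - f xstar ≤ 2 * L * R ^ 2 / (α ^ 2 * k ^ 2) := by
  obtain ⟨hα0, hα1⟩ := hα
  have hR0 : 0 ≤ R := hR ▸ norm_nonneg _
  -- ω lower bound and positivity
  have hωge : ∀ k : ℕ, ((k : ℝ) + 2) / 2 ≤ ω k := by
    intro k
    induction k with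
    | zero => norm_num [hω0]
    | succ k ih =>
      have hωpos : 0 < ω k := lt_of_lt_of_le (by positivity) ih
      have h1 : ω k ≤ Real.sqrt (1 / 4 + ω k ^ 2) := by
        have h2 := Real.sqrt_le_sqrt (show ω k ^ 2 ≤ 1 / 4 + ω k ^ 2 by linarith)
        rwa [Real.sqrt_sq hωpos.le] at h2
      rw [hωrec k]
      push_cast
      linarith
  have hωpos : ∀ k, 0 < ω k := fun k => lt_of_lt_of_le (by positivity) (hωge k)
  -- ω square recurrence
  have hωsq : ∀ k : ℕ, ω (k + 1) ^ 2 = ω (k + 1) + ω k ^ 2 := by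
    intro k
    have hs := Real.sq_sqrt (show (0:ℝ) ≤ 1 / 4 + ω k ^ 2 by positivity)
    rw [hωrec k]
    nlinarith [hs]
  -- nonnegativity of the gap
  have hδ : ∀ i, 0 ≤ f (x i) - f xstar := fun i => sub_nonneg.2 (hmin _)
  -- orthogonality at subspace minimizers
  have key_min : ∀ (k : ℕ) (d : EuclideanSpace ℝ (Fin n)),
      (∃ a b c : ℝ, d = a • gradient f (x k) + b • (x k - x 0)
        + c • (∑ i ∈ Finset.range (k + 1), ω i • gradient f (x i))) →
      ⟪gradient f (x (k + 1)), d⟫ = 0 := by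
    intro k d ⟨a, b, c, hd⟩
    obtain ⟨a₀, b₀, c₀, hx1⟩ := hmem k
    apply inner_grad_eq_zero_of_min f hdiff
    intro t
    have heq : x (k + 1) + t • d
        = x k + (a₀ + t * a) • gradient f (x k) + (b₀ + t * b) • (x k - x 0)
          + (c₀ + t * c) • (∑ i ∈ Finset.range (k + 1), ω i • gradient f (x i)) := by
      rw [hx1, hd]; module
    rw [heq]
    exact hsubmin k _ _ _
  have horthS : ∀ k : ℕ,
      ⟪gradient f (x (k + 1)), ∑ i ∈ Finset.range (k + 1), ω i • gradient f (x i)⟫ = 0 := by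
    intro k
    exact key_min k _ ⟨0, 0, 1, by module⟩
  have horthX : ∀ k : ℕ, ⟪gradient f (x (k + 1)), x (k + 1) - x 0⟫ = 0 := by
    intro k
    obtain ⟨a₀, b₀, c₀, hx1⟩ := hmem k
    exact key_min k _ ⟨a₀, b₀ + 1, c₀, by rw [hx1]; module⟩
  -- descent step
  have hdesc : ∀ k : ℕ,
      ‖gradient f (x k)‖ ^ 2 ≤ 2 * L * ((f (x k) - f xstar) - (f (x (k + 1)) - f xstar)) := by
    intro k
    have h1 : f (x (k + 1)) ≤ f (x k + (-(1 / L)) • gradient f (x k)) := by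
      have := hsubmin k (-(1 / L)) 0 0
      simpa using this
    have h2 := descent_lemma f hdiff L hL hsmooth (x k) ((-(1 / L)) • gradient f (x k))
    rw [real_inner_smul_right, real_inner_self_eq_norm_sq, norm_smul] at h2
    have hLne : L ≠ 0 := ne_of_gt hL
    rw [Real.norm_eq_abs, abs_neg, abs_of_pos (show (0:ℝ) < 1 / L by positivity)] at h2
    have h3 : f (x (k + 1)) ≤ f (x k) - ‖gradient f (x k)‖ ^ 2 / (2 * L) := by
      have : (-(1/L)) * ‖gradient f (x k)‖ ^ 2 + L / 2 * (1 / L * ‖gradient f (x k)‖) ^ 2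
          = -(‖gradient f (x k)‖ ^ 2 / (2 * L)) := by field_simp; ring
      nlinarith [h1, h2]
    have h4 : ‖gradient f (x k)‖ ^ 2 / (2 * L) ≤ f (x k) - f (x (k + 1)) := by linarith
    have h5 := mul_le_mul_of_nonneg_right h4 (show (0:ℝ) ≤ 2 * L by positivity)
    rw [div_mul_cancel₀ _ (show (2 * L : ℝ) ≠ 0 by positivity)] at h5
    nlinarith [h5]
  -- WQC with orthogonality
  have hwi : ∀ i : ℕ, α * (f (x i) - f xstar) ≤ ⟪gradient f (x i), x 0 - xstar⟫ := by
    intro i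
    match i with
    | 0 => exact hwqc (x 0)
    | (j + 1) =>
      have h := hwqc (x (j + 1))
      have hsplit : (⟪gradient f (x (j + 1)), x (j + 1) - xstar⟫ : ℝ)
          = ⟪gradient f (x (j + 1)), x (j + 1) - x 0⟫
            + ⟪gradient f (x (j + 1)), x 0 - xstar⟫ := by
        rw [← inner_add_right]
        congr 1
        abel
      rw [hsplit, horthX j, zero_add] at h
      exact h
  -- norm of S via orthogonality
  have hSnorm : ∀ k : ℕ,
      ‖∑ i ∈ Finset.range (k + 1), ω i • gradient f (x i)‖ ^ 2
        = ∑ i ∈ Finset.range (k + 1), ω i ^ 2 * ‖gradient f (x i)‖ ^ 2 := by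
    intro k
    induction k with
    | zero =>
      simp [norm_smul, mul_pow]
    | succ k ih =>
      rw [Finset.sum_range_succ (f := fun i => ω i • gradient f (x i)),
        Finset.sum_range_succ (f := fun i => ω i ^ 2 * ‖gradient f (x i)‖ ^ 2)]
      rw [norm_add_sq_real, ih]
      have hz : ⟪(∑ i ∈ Finset.range (k + 1), ω i • gradient f (x i)),
          ω (k + 1) • gradient f (x (k + 1))⟫ = 0 := by
        rw [real_inner_smul_right, real_inner_comm, horthS k, mul_zero]
      rw [hz, norm_smul, mul_pow, Real.norm_eq_abs, sq_abs]
      ring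
  -- bound on weighted gap sum
  have hA1 : ∀ k : ℕ,
      α * (∑ i ∈ Finset.range (k + 1), ω i * (f (x i) - f xstar))
        ≤ ‖∑ i ∈ Finset.range (k + 1), ω i • gradient f (x i)‖ * R := by
    intro k
    have h1 : α * (∑ i ∈ Finset.range (k + 1), ω i * (f (x i) - f xstar))
        ≤ ∑ i ∈ Finset.range (k + 1), ω i * ⟪gradient f (x i), x 0 - xstar⟫ := by
      rw [Finset.mul_sum]
      apply Finset.sum_le_sum
      intro i _
      have := mul_le_mul_of_nonneg_left (hwi i) (hωpos i).le
      nlinarith [this]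
    have h2 : (∑ i ∈ Finset.range (k + 1), ω i * ⟪gradient f (x i), x 0 - xstar⟫)
        = ⟪∑ i ∈ Finset.range (k + 1), ω i • gradient f (x i), x 0 - xstar⟫ := by
      rw [sum_inner]
      congr 1
      ext i
      rw [real_inner_smul_left]
    have h3 := real_inner_le_norm (∑ i ∈ Finset.range (k + 1), ω i • gradient f (x i)) (x 0 - xstar)
    rw [← hR] at h3
    linarith [h1, h2 ▸ h1, h3]
  -- Abel summation
  have hAbel : ∀ k : ℕ,
      (∑ i ∈ Finset.range (k + 1), ω i ^ 2 * ((f (x i) - f xstar) - (f (x (i + 1)) - f xstar)))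
        = (∑ i ∈ Finset.range (k + 1), ω i * (f (x i) - f xstar))
          - ω k ^ 2 * (f (x (k + 1)) - f xstar) := by
    intro k
    induction k with
    | zero => simp [hω0]
    | succ k ih =>
      rw [Finset.sum_range_succ, ih]
      conv_rhs => rw [Finset.sum_range_succ]
      have h2 : ω (k + 1) ^ 2 * (f (x (k + 1)) - f xstar)
          = (ω (k + 1) + ω k ^ 2) * (f (x (k + 1)) - f xstar) := by rw [hωsq k]
      nlinarith [h2]
  -- combine into the S bound
  have hA2 : ∀ k : ℕ,
      ‖∑ i ∈ Finset.range (k + 1), ω i • gradient f (x i)‖ ^ 2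
        ≤ 2 * L * ((∑ i ∈ Finset.range (k + 1), ω i * (f (x i) - f xstar))
            - ω k ^ 2 * (f (x (k + 1)) - f xstar)) := by
    intro k
    rw [hSnorm k, ← hAbel k, Finset.mul_sum]
    apply Finset.sum_le_sum
    intro i _
    have h := hdesc i
    have := mul_le_mul_of_nonneg_left h (sq_nonneg (ω i))
    nlinarith [this]
  -- key per-step bound
  have hkey : ∀ k : ℕ, 2 * α ^ 2 * ω k ^ 2 * (f (x (k + 1)) - f xstar) ≤ L * R ^ 2 := by
    intro k
    set A := ∑ i ∈ Finset.range (k + 1), ω i * (f (x i) - f xstar) with hAdef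
    set s := ‖∑ i ∈ Finset.range (k + 1), ω i • gradient f (x i)‖ with hsdef
    have hApos : 0 ≤ A := Finset.sum_nonneg (fun i _ => mul_nonneg (hωpos i).le (hδ i))
    have hs0 : 0 ≤ s := norm_nonneg _
    have h1 := hA1 k
    have h2 := hA2 k
    have h3 : α * (α * A) ≤ α * (s * R) := mul_le_mul_of_nonneg_left h1 hα0.le
    have h4 : α ^ 2 * (s ^ 2) ≤ α ^ 2 * (2 * L * (A - ω k ^ 2 * (f (x (k + 1)) - f xstar))) :=
      mul_le_mul_of_nonneg_left h2 (sq_nonneg α)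
    have h5 : (0:ℝ) ≤ (α * s - L * R) ^ 2 := sq_nonneg _
    have h6 : 2 * L * (α ^ 2 * A) ≤ 2 * L * (α * (s * R)) :=
      mul_le_mul_of_nonneg_left (by nlinarith [h3]) (by positivity)
    have h7 : 2 * L * α ^ 2 * ω k ^ 2 * (f (x (k + 1)) - f xstar) ≤ L ^ 2 * R ^ 2 := by
      linarith only [h4, h5, h6]
    have h8 : L * (2 * α ^ 2 * ω k ^ 2 * (f (x (k + 1)) - f xstar)) ≤ L * (L * R ^ 2) := by
      linarith only [h7]
    exact le_of_mul_le_mul_left h8 hL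
  -- final bound
  intro k hk
  obtain ⟨m, rfl⟩ : ∃ m, k = m + 1 := ⟨k - 1, by omega⟩
  push_cast
  rw [le_div_iff₀ (show (0:ℝ) < α ^ 2 * ((m : ℝ) + 1) ^ 2 by positivity)]
  have hm2 : ((m : ℝ) + 1) / 2 ≤ ω m := by
    have := hωge m
    linarith
  have hW : (((m : ℝ) + 1) / 2) ^ 2 ≤ ω m ^ 2 :=
    pow_le_pow_left₀ (by positivity) hm2 2
  have hk2 := hkey m
  have h9 : α ^ 2 * (f (x (m + 1)) - f xstar) * ((((m : ℝ) + 1) / 2) ^ 2)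
      ≤ α ^ 2 * (f (x (m + 1)) - f xstar) * ω m ^ 2 :=
    mul_le_mul_of_nonneg_left hW (mul_nonneg (sq_nonneg α) (hδ (m + 1)))
  nlinarith [h9, hk2]
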